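/- arXiv:2602.16022 — 4 statements merged into one kernel-verified Lean document; each statement's English description precedes it below -/
import Mathlib

section
/- Let γ ∈ C¹([0,∞)) be positive and decreasing, M = α·sup s̄, and assume sup_{[0,M]} |γ'(z)/γ(z)| ≤ μ/(M·sup s). Define m(u) = α s̄(x) u/(u+μ). Then for every x, the map u ↦ (s(x) − u)/γ(m(u)) is strictly decreasing on (0,∞); explicitly, its derivative equals γ(m(u))^{−2}·(−γ(m(u)) − (s(x)−u) γ'(m(u)) α s̄(x) μ/(u+μ)²) < 0. -/
theorem stmt_10 {n : ℕ} (Ω : Set (EuclideanSpace ℝ (Fin n)))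
    (α μ S Ssup M : ℝ) (hα : 0 < α) (hμ : 0 < μ)
    (s sbar : EuclideanSpace ℝ (Fin n) → ℝ)
    (hsp : ∀ x ∈ Ω, 0 < s x) (hsbp : ∀ x ∈ Ω, 0 < sbar x)
    (hsS : ∀ x ∈ Ω, sbar x ≤ S) (hSatt : ∃ x ∈ Ω, sbar x = S)
    (hssup : ∀ x ∈ Ω, s x ≤ Ssup) (hSsupatt : ∃ x ∈ Ω, s x = Ssup)
    (hM : M = α * S)
    (γ γ' : ℝ → ℝ)
    (hγd : ∀ z, 0 ≤ z → HasDerivAt γ (γ' z) z)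
    (hγpos : ∀ z, 0 ≤ z → 0 < γ z)
    (hγ'np : ∀ z, 0 ≤ z → γ' z ≤ 0)
    (hbound : ∀ z ∈ Set.Icc (0:ℝ) M, |γ' z / γ z| ≤ μ / (M * Ssup)) :
    ∀ x ∈ Ω,
      StrictAntiOn (fun u : ℝ => (s x - u) / γ (α * sbar x * u / (u + μ))) (Set.Ioi 0) ∧
      ∀ u : ℝ, 0 < u →
        HasDerivAt (fun u : ℝ => (s x - u) / γ (α * sbar x * u / (u + μ)))
          ((γ (α * sbar x * u / (u + μ)))⁻¹ ^ 2 *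
            (-γ (α * sbar x * u / (u + μ)) -
              (s x - u) * γ' (α * sbar x * u / (u + μ)) *
                (α * sbar x * μ / (u + μ) ^ 2))) u ∧
        (γ (α * sbar x * u / (u + μ)))⁻¹ ^ 2 *
            (-γ (α * sbar x * u / (u + μ)) -
              (s x - u) * γ' (α * sbar x * u / (u + μ)) *
                (α * sbar x * μ / (u + μ) ^ 2)) < 0 := by
  intro x hx
  have hax : 0 < α * sbar x := mul_pos hα (hsbp x hx)
  have hSpos : 0 < S := lt_of_lt_of_le (hsbp x hx) (hsS x hx)
  have hMpos : 0 < M := hM ▸ mul_pos hα hSpos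
  have hSsuppos : 0 < Ssup := lt_of_lt_of_le (hsp x hx) (hssup x hx)
  have haM : α * sbar x ≤ M := by
    rw [hM]; exact mul_le_mul_of_nonneg_left (hsS x hx) hα.le
  have key : ∀ u : ℝ, 0 < u →
      HasDerivAt (fun u : ℝ => (s x - u) / γ (α * sbar x * u / (u + μ)))
        ((γ (α * sbar x * u / (u + μ)))⁻¹ ^ 2 *
          (-γ (α * sbar x * u / (u + μ)) -
            (s x - u) * γ' (α * sbar x * u / (u + μ)) *
              (α * sbar x * μ / (u + μ) ^ 2))) u ∧
      (γ (α * sbar x * u / (u + μ)))⁻¹ ^ 2 *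
          (-γ (α * sbar x * u / (u + μ)) -
            (s x - u) * γ' (α * sbar x * u / (u + μ)) *
              (α * sbar x * μ / (u + μ) ^ 2)) < 0 := by
    intro u hu
    have huμ : 0 < u + μ := by linarith
    set m : ℝ := α * sbar x * u / (u + μ) with hm_def
    have hm_nonneg : 0 ≤ m := by positivity
    have hm_lt : m < α * sbar x := by
      rw [hm_def, div_lt_iff₀ huμ]; nlinarith
    have hmM : m ≤ M := hm_lt.le.trans haM
    have hγm : 0 < γ m := hγpos m hm_nonneg
    have hmder : HasDerivAt (fun u : ℝ => α * sbar x * u / (u + μ))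
        (α * sbar x * μ / (u + μ) ^ 2) u := by
      have h1 : HasDerivAt (fun u : ℝ => α * sbar x * u) (α * sbar x) u := by
        simpa using (hasDerivAt_id u).const_mul (α * sbar x)
      have h2 : HasDerivAt (fun u : ℝ => u + μ) 1 u := (hasDerivAt_id u).add_const μ
      have := h1.div h2 (ne_of_gt huμ)
      refine this.congr_deriv ?_
      ring
    have hcomp : HasDerivAt (fun u : ℝ => γ (α * sbar x * u / (u + μ)))
        (γ' m * (α * sbar x * μ / (u + μ) ^ 2)) u :=
      (hγd m hm_nonneg).comp u hmder
    have hnum : HasDerivAt (fun u : ℝ => s x - u) (-1) u := by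
      simpa using ((hasDerivAt_id u).const_sub (s x))
    have hdiv := hnum.div hcomp (ne_of_gt hγm)
    constructor
    · refine hdiv.congr_deriv ?_
      rw [← hm_def]
      ring
    · have hT : -γ m - (s x - u) * γ' m * (α * sbar x * μ / (u + μ) ^ 2) < 0 := by
        set d : ℝ := α * sbar x * μ / (u + μ) ^ 2 with hd_def
        have hd : 0 < d := by positivity
        rcases le_or_gt (s x) u with hcase | hcase
        · have h1 : 0 ≤ (s x - u) * γ' m := by
            nlinarith [hγ'np m hm_nonneg]
          nlinarith
        · set p : ℝ := s x - u with hp_def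
          have hp : 0 < p := by simp [hp_def]; linarith
          have hpS : p < Ssup := by
            have := hssup x hx; simp [hp_def]; linarith
          have hB : -γ' m ≤ γ m * (μ / (M * Ssup)) := by
            have hb := hbound m ⟨hm_nonneg, hmM⟩
            rw [abs_div, abs_of_nonpos (hγ'np m hm_nonneg), abs_of_pos hγm,
              div_le_iff₀ hγm] at hb
            linarith [hb]
          have hd_lt : d < M / μ := by
            rw [hd_def, div_lt_div_iff₀ (by positivity) hμ]
            nlinarith [mul_pos hMpos (mul_pos hu hμ), mul_pos hMpos (mul_pos hu hu),
              mul_le_mul_of_nonneg_right haM (mul_pos hμ hμ).le]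
          have h1 : p * (-γ' m) * d ≤ p * (γ m * (μ / (M * Ssup))) * d :=
            mul_le_mul_of_nonneg_right (mul_le_mul_of_nonneg_left hB hp.le) hd.le
          have h2 : p * (γ m * (μ / (M * Ssup))) * d
              < p * (γ m * (μ / (M * Ssup))) * (M / μ) :=
            mul_lt_mul_of_pos_left hd_lt (by positivity)
          have h3 : p * (γ m * (μ / (M * Ssup))) * (M / μ) = p * γ m / Ssup := by
            field_simp
          have h4 : p * γ m / Ssup < γ m := by
            rw [div_lt_iff₀ hSsuppos]
            nlinarith
          nlinarith
      exact mul_neg_of_pos_of_neg (by positivity) hT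
  refine ⟨?_, fun u hu => ⟨(key u hu).1, (key u hu).2⟩⟩
  apply strictAntiOn_of_deriv_neg (convex_Ioi 0)
  · exact fun u hu => ((key u hu).1.continuousAt).continuousWithinAt
  · intro u hu
    rw [interior_Ioi] at hu
    rw [(key u hu).1.deriv]
    exact (key u hu).2
end

section
/- Let γ₀, ℓ > 0 and s ∈ C¹([−ℓ, ℓ]) be even and strictly decreasing on (0, ℓ). Suppose v ∈ C²([−ℓ, ℓ]) is an even positive solution of γ₀ v'' + v(s − v) = 0 with v'(±ℓ) = 0 and v is strictly increasing on (0, ℓ). Then v(0) ≥ s(0) and v(ℓ) ≤ s(ℓ), which contradicts s(ℓ) < s(0); hence there exists x ∈ (0, ℓ) with v'(x) ≤ 0. -/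
theorem stmt_13 (γ0 ℓ : ℝ) (hγ0 : 0 < γ0) (hℓ : 0 < ℓ)
    (s : ℝ → ℝ) (hs : ContDiff ℝ 1 s) (hseven : ∀ x, s (-x) = s x)
    (hsdec : StrictAntiOn s (Set.Ioo 0 ℓ))
    (v : ℝ → ℝ) (hv : ContDiff ℝ 2 v)
    (hveven : ∀ x, v (-x) = v x)
    (hveq : ∀ x ∈ Set.Icc (-ℓ) ℓ, γ0 * deriv (deriv v) x + v x * (s x - v x) = 0)
    (hvbcl : deriv v (-ℓ) = 0) (hvbcr : deriv v ℓ = 0)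
    (hvpos : ∀ x ∈ Set.Icc (-ℓ) ℓ, 0 < v x) :
    ∃ x ∈ Set.Ioo 0 ℓ, deriv v x ≤ 0 := by
  by_contra hcon
  push_neg at hcon
  -- deriv v is C¹
  have hv' : ContDiff ℝ 1 (deriv v) := by
    have h2 : ContDiff ℝ (1 + 1) v := by norm_num at hv ⊢; exact hv
    exact (contDiff_succ_iff_deriv.mp h2).2.2
  have hdvdiff : Differentiable ℝ (deriv v) := hv'.differentiable one_ne_zero
  -- deriv v is odd
  have hodd : ∀ x : ℝ, deriv v (-x) = - deriv v x := by
    intro x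
    have h1 : deriv (fun y => v (-y)) x = - deriv v (-x) := deriv_comp_neg v x
    have h2 : (fun y => v (-y)) = v := funext hveven
    rw [h2] at h1
    linarith
  have hdv0 : deriv v 0 = 0 := by have := hodd 0; simp at this; linarith
  -- second derivative at 0 is ≥ 0
  have hslope0 := hasDerivAt_iff_tendsto_slope.mp (hdvdiff 0).hasDerivAt
  have h20 : 0 ≤ deriv (deriv v) 0 := by
    refine ge_of_tendsto (hslope0.mono_left
      (nhdsWithin_mono _ fun x (hx : x ∈ Set.Ioi (0:ℝ)) => ne_of_gt hx)) ?_
    filter_upwards [Ioo_mem_nhdsGT_of_mem ⟨le_rfl, hℓ⟩] with x hx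
    have hvx := hcon x hx
    rw [slope_def_field, hdv0, sub_zero]
    exact div_nonneg hvx.le (by linarith [hx.1])
  -- second derivative at ℓ is ≤ 0
  have hslopeℓ := hasDerivAt_iff_tendsto_slope.mp (hdvdiff ℓ).hasDerivAt
  have h2ℓ : deriv (deriv v) ℓ ≤ 0 := by
    refine le_of_tendsto (hslopeℓ.mono_left
      (nhdsWithin_mono _ fun x (hx : x ∈ Set.Iio ℓ) => ne_of_lt hx)) ?_
    filter_upwards [Ioo_mem_nhdsLT_of_mem ⟨hℓ, le_rfl⟩] with x hx
    have hvx := hcon x hx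
    rw [slope_def_field, hvbcr, sub_zero]
    apply div_nonpos_of_nonneg_of_nonpos (le_of_lt hvx)
    linarith [hx.2]
  -- v strictly monotone on [0, ℓ]
  have hmono : StrictMonoOn v (Set.Icc 0 ℓ) := by
    apply strictMonoOn_of_deriv_pos (convex_Icc 0 ℓ) hv.continuous.continuousOn
    intro x hx
    rw [interior_Icc] at hx
    exact hcon x hx
  have hvℓlt : v 0 < v ℓ := hmono ⟨le_rfl, le_of_lt hℓ⟩ ⟨le_of_lt hℓ, le_rfl⟩ hℓ
  -- s(0) ≥ s(ℓ/3)
  have ha : (ℓ/3) ∈ Set.Ioo 0 ℓ := ⟨by linarith, by linarith⟩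
  have hb : (2*ℓ/3) ∈ Set.Ioo 0 ℓ := ⟨by linarith, by linarith⟩
  have hs0 : s (ℓ/3) ≤ s 0 := by
    have ht : Filter.Tendsto s (nhdsWithin 0 (Set.Ioi 0)) (nhds (s 0)) :=
      (hs.continuous.tendsto 0).mono_left nhdsWithin_le_nhds
    refine ge_of_tendsto ht ?_
    filter_upwards [Ioo_mem_nhdsGT_of_mem ⟨le_rfl, ha.1⟩] with x hx
    exact le_of_lt (hsdec ⟨hx.1, lt_trans hx.2 ha.2⟩ ha hx.2)
  have hsℓ : s ℓ ≤ s (2*ℓ/3) := by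
    have ht : Filter.Tendsto s (nhdsWithin ℓ (Set.Iio ℓ)) (nhds (s ℓ)) :=
      (hs.continuous.tendsto ℓ).mono_left nhdsWithin_le_nhds
    refine le_of_tendsto ht ?_
    filter_upwards [Ioo_mem_nhdsLT_of_mem (⟨by linarith, le_rfl⟩ : ℓ ∈ Set.Ioc (2*ℓ/3) ℓ)] with x hx
    exact le_of_lt (hsdec hb ⟨lt_trans hb.1 hx.1, hx.2⟩ hx.1)
  have hsab : s (2*ℓ/3) < s (ℓ/3) := hsdec ha hb (by linarith)
  -- ODE at 0 and ℓ
  have h0mem : (0:ℝ) ∈ Set.Icc (-ℓ) ℓ := ⟨by linarith, le_of_lt hℓ⟩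
  have hℓmem : ℓ ∈ Set.Icc (-ℓ) ℓ := ⟨by linarith, le_rfl⟩
  have heq0 := hveq 0 h0mem
  have heqℓ := hveq ℓ hℓmem
  have hv0pos := hvpos 0 h0mem
  have hvℓpos := hvpos ℓ hℓmem
  -- v 0 ≥ s 0
  have h1 : s 0 ≤ v 0 := by nlinarith
  -- v ℓ ≤ s ℓ
  have h2 : v ℓ ≤ s ℓ := by nlinarith
  linarith
end

section
/- Let γ₀, ℓ > 0 and let s ∈ C¹([−ℓ, ℓ]) be even and strictly decreasing on (0, ℓ). If v ∈ C²([−ℓ, ℓ]) (with v'' of class C¹) is the unique positive solution of γ₀ v'' + v(s − v) = 0 on (−ℓ, ℓ) with v'(−ℓ) = v'(ℓ) = 0, then v is even and nonincreasing on [0, ℓ]; in particular v attains its maximum at x = 0. -/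
theorem stmt_14 (γ0 ℓ : ℝ) (hγ0 : 0 < γ0) (hℓ : 0 < ℓ)
    (s : ℝ → ℝ) (hs : ContDiff ℝ 1 s) (hseven : ∀ x, s (-x) = s x)
    (hsdec : StrictAntiOn s (Set.Ioo 0 ℓ))
    (v : ℝ → ℝ) (hv : ContDiff ℝ 2 v) (hv'' : ContDiff ℝ 1 (deriv (deriv v)))
    (hveq : ∀ x ∈ Set.Icc (-ℓ) ℓ, γ0 * deriv (deriv v) x + v x * (s x - v x) = 0)
    (hvbcl : deriv v (-ℓ) = 0) (hvbcr : deriv v ℓ = 0)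
    (hvpos : ∀ x ∈ Set.Icc (-ℓ) ℓ, 0 < v x)
    (huniq : ∀ w : ℝ → ℝ, ContDiff ℝ 2 w →
      (∀ x ∈ Set.Icc (-ℓ) ℓ, γ0 * deriv (deriv w) x + w x * (s x - w x) = 0) →
      deriv w (-ℓ) = 0 → deriv w ℓ = 0 →
      (∀ x ∈ Set.Icc (-ℓ) ℓ, 0 < w x) →
      ∀ x ∈ Set.Icc (-ℓ) ℓ, w x = v x) :
    (∀ x ∈ Set.Icc (-ℓ) ℓ, v (-x) = v x) ∧
    AntitoneOn v (Set.Icc 0 ℓ) ∧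
    ∀ x ∈ Set.Icc (-ℓ) ℓ, v x ≤ v 0 := by
  have hvdiff : Differentiable ℝ v := hv.differentiable two_ne_zero
  have hv1 : ContDiff ℝ 1 (deriv v) :=
    ((contDiff_succ_iff_deriv (n := 1)).mp (by exact_mod_cast hv)).2.2
  have hv'diff : Differentiable ℝ (deriv v) := hv1.differentiable one_ne_zero
  have hv''diff : Differentiable ℝ (deriv (deriv v)) := hv''.differentiable one_ne_zero
  have hsdiff : Differentiable ℝ s := hs.differentiable one_ne_zero
  -- evenness via uniqueness
  have hmem : ∀ x : ℝ, x ∈ Set.Icc (-ℓ) ℓ → -x ∈ Set.Icc (-ℓ) ℓ := by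
    intro x hx; simp only [Set.mem_Icc] at hx ⊢; constructor <;> linarith [hx.1, hx.2]
  set w : ℝ → ℝ := fun x => v (-x) with hw
  have hwderiv : deriv w = fun x => -deriv v (-x) := funext fun x => deriv_comp_neg v x
  have hwderiv2 : ∀ x, deriv (deriv w) x = deriv (deriv v) (-x) := by
    intro x
    rw [hwderiv]
    have : deriv (fun y => -deriv v (-y)) x = -deriv (fun y => deriv v (-y)) x := deriv.neg
    rw [this, deriv_comp_neg (deriv v) x, neg_neg]
  have hE : ∀ x ∈ Set.Icc (-ℓ) ℓ, v (-x) = v x := by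
    have hwcd : ContDiff ℝ 2 w := hv.comp (contDiff_neg (F := ℝ))
    refine huniq w hwcd ?_ ?_ ?_ ?_
    · intro x hx
      have h1 := hveq (-x) (hmem x hx)
      rw [hwderiv2 x]; simpa [hw, hseven x] using h1
    · rw [hwderiv]; simp [hvbcr]
    · rw [hwderiv]; simpa using hvbcl
    · intro x hx; exact hvpos (-x) (hmem x hx)
  -- deriv v 0 = 0
  have hIccnhds : ∀ x : ℝ, x ∈ Set.Ioo (-ℓ) ℓ → Set.Icc (-ℓ) ℓ ∈ nhds x := by
    intro x hx
    exact Filter.mem_of_superset (Ioo_mem_nhds hx.1 hx.2) Set.Ioo_subset_Icc_self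
  have hu0 : deriv v 0 = 0 := by
    have hev : v =ᶠ[nhds 0] w := by
      filter_upwards [hIccnhds 0 (by constructor <;> linarith)] with x hx
      exact (hE x hx).symm
    have h1 : deriv v 0 = deriv w 0 := hev.deriv_eq
    rw [hwderiv] at h1; simp at h1
    linarith
  -- key: deriv v ≤ 0 on Icc 0 ℓ
  have hucont : Continuous (deriv v) := hv1.continuous
  have hkey : ∀ x ∈ Set.Icc 0 ℓ, deriv v x ≤ 0 := by
    by_contra hcon
    push_neg at hcon
    obtain ⟨z, hz, hzpos⟩ := hcon
    obtain ⟨x₀, hx₀mem, hx₀max⟩ := (isCompact_Icc (a := (0:ℝ)) (b := ℓ)).exists_isMaxOn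
      (Set.nonempty_Icc.mpr hℓ.le) hucont.continuousOn
    have hx₀pos : 0 < deriv v x₀ := lt_of_lt_of_le hzpos (hx₀max hz)
    have hx₀ne0 : x₀ ≠ 0 := by rintro rfl; rw [hu0] at hx₀pos; exact lt_irrefl 0 hx₀pos
    have hx₀neℓ : x₀ ≠ ℓ := by rintro rfl; rw [hvbcr] at hx₀pos; exact lt_irrefl 0 hx₀pos
    have hx₀Ioo : x₀ ∈ Set.Ioo (0:ℝ) ℓ :=
      ⟨lt_of_le_of_ne hx₀mem.1 (Ne.symm hx₀ne0), lt_of_le_of_ne hx₀mem.2 hx₀neℓ⟩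
    have hx₀Icc : x₀ ∈ Set.Icc (-ℓ) ℓ := ⟨by linarith [hx₀Ioo.1], hx₀mem.2⟩
    have hlocmax : IsLocalMax (deriv v) x₀ :=
      hx₀max.isLocalMax (Icc_mem_nhds (by linarith [hx₀Ioo.1]) hx₀Ioo.2)
    have hd2 : deriv (deriv v) x₀ = 0 := hlocmax.deriv_eq_zero
    -- from the equation: s x₀ = v x₀
    have hsv : s x₀ = v x₀ := by
      have h1 := hveq x₀ hx₀Icc
      rw [hd2] at h1
      have h2 : v x₀ * (s x₀ - v x₀) = 0 := by linarith
      have h3 : s x₀ - v x₀ = 0 := by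
        rcases mul_eq_zero.mp h2 with h | h
        · exact absurd h (ne_of_gt (hvpos x₀ hx₀Icc))
        · exact h
      linarith
    -- deriv s x₀ ≤ 0
    have hs'le : deriv s x₀ ≤ 0 := by
      have hda : HasDerivAt s (deriv s x₀) x₀ := (hsdiff x₀).hasDerivAt
      have hts : Filter.Tendsto (slope s x₀) (nhdsWithin x₀ (Set.Ioi x₀)) (nhds (deriv s x₀)) :=
        (hasDerivAt_iff_tendsto_slope.mp hda).mono_left
          (nhdsWithin_mono _ (fun y hy => ne_of_gt hy))
      refine le_of_tendsto hts ?_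
      filter_upwards [self_mem_nhdsWithin,
        Ioo_mem_nhdsGT_of_mem (Set.mem_Ico.mpr ⟨le_refl x₀, hx₀Ioo.2⟩)] with y hy hy'
      have hy1 : x₀ < y := hy
      have hsle : s y < s x₀ := hsdec hx₀Ioo ⟨lt_trans hx₀Ioo.1 hy1, hy'.2⟩ hy1
      have : slope s x₀ y = (s y - s x₀) / (y - x₀) := by
        rw [slope_def_field]
      rw [this]
      apply div_nonpos_of_nonpos_of_nonneg <;> linarith
    -- third derivative at x₀ is positive
    have hc : HasDerivAt (deriv (deriv v)) (deriv (deriv (deriv v)) x₀) x₀ :=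
      (hv''diff x₀).hasDerivAt
    have hF : HasDerivAt (fun x => γ0 * deriv (deriv v) x + v x * (s x - v x))
        (γ0 * deriv (deriv (deriv v)) x₀ +
          (deriv v x₀ * (s x₀ - v x₀) + v x₀ * (deriv s x₀ - deriv v x₀))) x₀ := by
      exact ((hc.const_mul γ0).add
        (((hvdiff x₀).hasDerivAt).mul (((hsdiff x₀).hasDerivAt).sub ((hvdiff x₀).hasDerivAt))))
    have hFzero : (fun x => γ0 * deriv (deriv v) x + v x * (s x - v x)) =ᶠ[nhds x₀]
        (fun _ => (0:ℝ)) := by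
      filter_upwards [hIccnhds x₀ ⟨by linarith [hx₀Ioo.1], lt_of_le_of_ne hx₀mem.2 hx₀neℓ⟩]
        with x hx
      exact hveq x hx
    have hF0 : HasDerivAt (fun _ : ℝ => (0:ℝ))
        (γ0 * deriv (deriv (deriv v)) x₀ +
          (deriv v x₀ * (s x₀ - v x₀) + v x₀ * (deriv s x₀ - deriv v x₀))) x₀ :=
      hF.congr_of_eventuallyEq hFzero.symm
    have hDval : γ0 * deriv (deriv (deriv v)) x₀ +
        (deriv v x₀ * (s x₀ - v x₀) + v x₀ * (deriv s x₀ - deriv v x₀)) = 0 := by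
      have := hF0.deriv
      rw [deriv_const] at this
      linarith [this]
    have h3pos : 0 < deriv (deriv (deriv v)) x₀ := by
      have hvp : 0 < v x₀ := hvpos x₀ hx₀Icc
      have : γ0 * deriv (deriv (deriv v)) x₀ = v x₀ * (deriv v x₀ - deriv s x₀) := by
        rw [hsv] at hDval; ring_nf at hDval ⊢; linarith
      have hpos : 0 < v x₀ * (deriv v x₀ - deriv s x₀) :=
        mul_pos hvp (by linarith)
      nlinarith
    -- find b > x₀ in Icc with deriv v b > deriv v x₀, contradiction
    have h3cont : Continuous (deriv (deriv (deriv v))) := hv''.continuous_deriv le_rfl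
    have hev3 : ∀ᶠ x in nhds x₀, 0 < deriv (deriv (deriv v)) x :=
      (h3cont.tendsto x₀).eventually (eventually_gt_nhds h3pos)
    obtain ⟨δ, hδpos, hδ⟩ := Metric.eventually_nhds_iff.mp hev3
    set b : ℝ := x₀ + min (δ / 2) ((ℓ - x₀) / 2) with hb
    have hminpos : 0 < min (δ / 2) ((ℓ - x₀) / 2) :=
      lt_min (by linarith) (by linarith [hx₀Ioo.2])
    have hbx : x₀ < b := lt_add_of_pos_right x₀ hminpos
    have hbℓ : b ≤ ℓ := by
      have : min (δ / 2) ((ℓ - x₀) / 2) ≤ (ℓ - x₀) / 2 := min_le_right _ _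
      simp only [hb]; linarith
    have hball : ∀ x ∈ Set.Icc x₀ b, 0 < deriv (deriv (deriv v)) x := by
      intro x hx
      apply hδ
      have h1 : min (δ / 2) ((ℓ - x₀) / 2) ≤ δ / 2 := min_le_left _ _
      have hd : dist x x₀ = |x - x₀| := rfl
      rw [hd, abs_lt]
      constructor
      · linarith [hx.1]
      · have := hx.2; simp only [hb] at this; linarith
    -- deriv (deriv v) strictly increasing on [x₀, b], zero at x₀, so positive on (x₀, b)
    have hmono2 : StrictMonoOn (deriv (deriv v)) (Set.Icc x₀ b) :=
      strictMonoOn_of_deriv_pos (convex_Icc _ _) hv''.continuous.continuousOn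
        (fun x hx => hball x (interior_subset hx))
    have hpos2 : ∀ x ∈ Set.Ioo x₀ b, 0 < deriv (deriv v) x := by
      intro x hx
      have := hmono2 (Set.left_mem_Icc.mpr hbx.le) ⟨hx.1.le, hx.2.le⟩ hx.1
      rw [hd2] at this
      exact this
    have hmono1 : StrictMonoOn (deriv v) (Set.Icc x₀ b) :=
      strictMonoOn_of_deriv_pos (convex_Icc _ _) hucont.continuousOn
        (fun x hx => by
          have hx' : x ∈ Set.Ioo x₀ b := by
            rwa [interior_Icc] at hx
          exact hpos2 x hx')
    have hcontr : deriv v x₀ < deriv v b :=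
      hmono1 (Set.left_mem_Icc.mpr hbx.le) (Set.right_mem_Icc.mpr hbx.le) hbx
    have hble : deriv v b ≤ deriv v x₀ :=
      hx₀max ⟨by linarith [hx₀Ioo.1, hbx], hbℓ⟩
    linarith
  -- antitone
  have hanti : AntitoneOn v (Set.Icc 0 ℓ) := by
    apply antitoneOn_of_deriv_nonpos (convex_Icc _ _) hvdiff.continuous.continuousOn
      hvdiff.differentiableOn
    intro x hx
    rw [interior_Icc] at hx
    exact hkey x (Set.mem_Icc.mpr ⟨hx.1.le, hx.2.le⟩)
  refine ⟨hE, hanti, ?_⟩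
  intro x hx
  rcases le_or_gt 0 x with h0 | h0
  · exact hanti (Set.left_mem_Icc.mpr hℓ.le) ⟨h0, hx.2⟩ h0
  · have h1 : v x = v (-x) := by
      have := hE (-x) (hmem x hx)
      simpa using this
    rw [h1]
    exact hanti (Set.left_mem_Icc.mpr hℓ.le) ⟨by linarith, by linarith [hx.1]⟩ (by linarith)
end

section
/- Let γ₀, ℓ > 0, s ∈ C²([−ℓ, ℓ]) even, positive, decreasing on (0, ℓ), with s''(0) < 0. If u₀ ∈ C²([−ℓ, ℓ]) is a positive even solution of γ₀ u₀'' + u₀(s − u₀) = 0 with u₀'(±ℓ) = 0 that attains its maximum at x = 0, then u₀(0) < s(0). -/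
private lemma even_deriv_zero' (f : ℝ → ℝ) (he : ∀ x, f (-x) = f x) : deriv f 0 = 0 := by
  have h := deriv_comp_neg f 0
  have hfe : (fun x => f (-x)) = f := funext he
  rw [hfe, neg_zero] at h
  linarith

theorem stmt_15 (γ0 ℓ : ℝ) (hγ0 : 0 < γ0) (hℓ : 0 < ℓ)
    (s : ℝ → ℝ) (hs : ContDiff ℝ 2 s) (hseven : ∀ x, s (-x) = s x)
    (hspos : ∀ x ∈ Set.Icc (-ℓ) ℓ, 0 < s x)
    (hsdec : StrictAntiOn s (Set.Ioo 0 ℓ))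
    (hs'' : deriv (deriv s) 0 < 0)
    (u0 : ℝ → ℝ) (hu0 : ContDiff ℝ 2 u0)
    (hu0even : ∀ x, u0 (-x) = u0 x)
    (hu0pos : ∀ x ∈ Set.Icc (-ℓ) ℓ, 0 < u0 x)
    (hu0eq : ∀ x ∈ Set.Icc (-ℓ) ℓ, γ0 * deriv (deriv u0) x + u0 x * (s x - u0 x) = 0)
    (hbcl : deriv u0 (-ℓ) = 0) (hbcr : deriv u0 ℓ = 0)
    (hmax : ∀ x ∈ Set.Icc (-ℓ) ℓ, u0 x ≤ u0 0) :
    u0 0 < s 0 := by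
  -- basic regularity facts
  have hu02 : ContDiff ℝ ((1 : WithTop ℕ∞) + 1) u0 := by norm_num; exact hu0
  have hs2 : ContDiff ℝ ((1 : WithTop ℕ∞) + 1) s := by norm_num; exact hs
  have hu0d : Differentiable ℝ u0 := hu0.differentiable (by norm_num)
  have hsd : Differentiable ℝ s := hs.differentiable (by norm_num)
  have hu0' : ContDiff ℝ 1 (deriv u0) := (contDiff_succ_iff_deriv.mp hu02).2.2
  have hs' : ContDiff ℝ 1 (deriv s) := (contDiff_succ_iff_deriv.mp hs2).2.2
  have hu0'd : Differentiable ℝ (deriv u0) := hu0'.differentiable one_ne_zero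
  have hs'd : Differentiable ℝ (deriv s) := hs'.differentiable one_ne_zero
  have hu0''c : Continuous (deriv (deriv u0)) := hu0'.continuous_deriv le_rfl
  have hs''c : Continuous (deriv (deriv s)) := hs'.continuous_deriv le_rfl
  have hd0 : deriv u0 0 = 0 := even_deriv_zero' u0 hu0even
  have hs0' : deriv s 0 = 0 := even_deriv_zero' s hseven
  by_contra hcon
  push_neg at hcon  -- hcon : s 0 ≤ u0 0
  -- Claim: there is δ with 0 < δ ≤ ℓ and s < u0 on (0, δ)
  have key : ∃ δ, 0 < δ ∧ δ ≤ ℓ ∧ ∀ x ∈ Set.Ioo (0:ℝ) δ, s x < u0 x := by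
    rcases eq_or_lt_of_le hcon with heq | hlt
    · -- equality case: z = u0 - s has z(0)=z'(0)=0, z''(0)>0
      have h0mem : (0:ℝ) ∈ Set.Icc (-ℓ) ℓ := by constructor <;> linarith
      have he0 := hu0eq 0 h0mem
      have hu0''0 : deriv (deriv u0) 0 = 0 := by
        have h1 : u0 0 * (s 0 - u0 0) = 0 := by rw [heq]; ring
        rw [h1, add_zero] at he0
        have := mul_eq_zero.mp he0
        rcases this with h | h
        · exact absurd h (ne_of_gt hγ0)
        · exact h
      set z : ℝ → ℝ := fun x => u0 x - s x with hz
      have hz1 : deriv z = fun x => deriv u0 x - deriv s x :=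
        funext fun x => deriv_sub (hu0d x) (hsd x)
      have hz2 : deriv (deriv z) = fun x => deriv (deriv u0) x - deriv (deriv s) x := by
        rw [hz1]; exact funext fun x => deriv_sub (hu0'd x) (hs'd x)
      have hz'0 : deriv z 0 = 0 := by rw [hz1]; simp [hd0, hs0']
      have hz''c : Continuous (deriv (deriv z)) := by rw [hz2]; exact hu0''c.sub hs''c
      have hz''0 : 0 < deriv (deriv z) 0 := by rw [hz2]; simp [hu0''0]; linarith
      have hev : ∀ᶠ x in nhds (0:ℝ), 0 < deriv (deriv z) x := by
        have := hz''c.continuousAt (x := 0)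
        exact this (Ioi_mem_nhds hz''0)
      obtain ⟨ε, hε, hball⟩ := Metric.eventually_nhds_iff.mp hev
      refine ⟨min ε ℓ, lt_min hε hℓ, min_le_right _ _, ?_⟩
      set δ := min ε ℓ with hδ
      have hgpos : ∀ x ∈ Set.Icc (0:ℝ) δ, x ≠ 0 → True := fun _ _ _ => trivial
      have hmono1 : StrictMonoOn (deriv z) (Set.Icc 0 δ) := by
        apply strictMonoOn_of_deriv_pos (convex_Icc 0 δ)
        · rw [hz1]; exact ((hu0'.continuous.sub hs'.continuous)).continuousOn
        · intro x hx
          rw [interior_Icc] at hx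
          apply hball
          rw [Real.dist_eq, sub_zero, abs_of_pos hx.1]
          exact lt_of_lt_of_le hx.2 (min_le_left _ _)
      have hz'pos : ∀ x ∈ Set.Ioo (0:ℝ) δ, 0 < deriv z x := by
        intro x hx
        have := hmono1 ⟨le_rfl, le_of_lt (lt_min hε hℓ)⟩ ⟨le_of_lt hx.1, le_of_lt hx.2⟩ hx.1
        rwa [hz'0] at this
      have hmono2 : StrictMonoOn z (Set.Icc 0 δ) := by
        apply strictMonoOn_of_deriv_pos (convex_Icc 0 δ)
        · exact (hu0d.continuous.sub hsd.continuous).continuousOn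
        · intro x hx
          rw [interior_Icc] at hx
          exact hz'pos x hx
      intro x hx
      have := hmono2 ⟨le_rfl, le_of_lt (lt_min hε hℓ)⟩ ⟨le_of_lt hx.1, le_of_lt hx.2⟩ hx.1
      have hz0 : z 0 = 0 := by simp [hz, heq]
      rw [hz0] at this
      simpa [hz, sub_pos] using this
    · -- strict case: u0 - s positive at 0, use continuity
      have hcont : ContinuousAt (fun x => u0 x - s x) 0 :=
        (hu0d.continuous.sub hsd.continuous).continuousAt
      have hev : ∀ᶠ x in nhds (0:ℝ), 0 < u0 x - s x := by
        have h0 : (0:ℝ) < u0 0 - s 0 := by linarith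
        exact hcont (Ioi_mem_nhds h0)
      obtain ⟨ε, hε, hball⟩ := Metric.eventually_nhds_iff.mp hev
      refine ⟨min ε ℓ, lt_min hε hℓ, min_le_right _ _, ?_⟩
      intro x hx
      have : 0 < u0 x - s x := by
        apply hball
        rw [Real.dist_eq, sub_zero, abs_of_pos hx.1]
        exact lt_of_lt_of_le hx.2 (min_le_left _ _)
      linarith
  obtain ⟨δ, hδpos, hδℓ, hδ⟩ := key
  -- On Icc 0 δ, deriv (deriv u0) > 0 on interior, so deriv u0 strictly increasing
  have hmemIcc : ∀ x ∈ Set.Icc (0:ℝ) δ, x ∈ Set.Icc (-ℓ) ℓ := by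
    intro x hx
    exact ⟨by linarith [hx.1], by linarith [hx.2]⟩
  have hmono1 : StrictMonoOn (deriv u0) (Set.Icc 0 δ) := by
    apply strictMonoOn_of_deriv_pos (convex_Icc 0 δ) hu0'.continuous.continuousOn
    intro x hx
    rw [interior_Icc] at hx
    have hxI : x ∈ Set.Icc (-ℓ) ℓ := hmemIcc x ⟨le_of_lt hx.1, le_of_lt hx.2⟩
    have heq := hu0eq x hxI
    have hpos := hu0pos x hxI
    have hlt := hδ x hx
    nlinarith [mul_pos hpos (sub_pos.mpr hlt)]
  have hd'pos : ∀ x ∈ Set.Ioo (0:ℝ) δ, 0 < deriv u0 x := by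
    intro x hx
    have := hmono1 ⟨le_rfl, le_of_lt hδpos⟩ ⟨le_of_lt hx.1, le_of_lt hx.2⟩ hx.1
    rwa [hd0] at this
  have hmono2 : StrictMonoOn u0 (Set.Icc 0 δ) := by
    apply strictMonoOn_of_deriv_pos (convex_Icc 0 δ) hu0d.continuous.continuousOn
    intro x hx
    rw [interior_Icc] at hx
    exact hd'pos x hx
  have : u0 0 < u0 δ := hmono2 ⟨le_rfl, le_of_lt hδpos⟩ ⟨le_of_lt hδpos, le_rfl⟩ hδpos
  have := hmax δ (hmemIcc δ ⟨le_of_lt hδpos, le_rfl⟩)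
  linarith
end
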